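/- Let r ≥ 1 be a natural number and Z an integer. Let c, d : Fin r → ℤ satisfy: c i ≤ d i for all i; c (i+1) ≤ c i and c i ≤ d (i+1) ≤ Z whenever i + 1 < r; and d 0 = Z. Let d' be an integer with c (r−1) ≤ d' and 2(d' − c (r−1) + 1) < Z − c (r−1) + 1 (the final truncated range Icc (c (r−1)) d' is not Z-close). Define w i = d i − c i + 1 for all i, and w' i = d (i+1) − c i + 1 for i + 1 < r, w' (r−1) = d' − c (r−1) + 1. Then the product over i of the rational numbers (w' i)/(w i) is strictly less than 1/2. -/
import Mathlib


/-- After a series of truncations of successive maximal pairings with ranges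
`Icc (c i) (d i)`, ending with a final truncated range `Icc (c (r-1)) d'` that is not
`Z`-close, the product of the width ratios (truncated width over original width) is
less than `1/2`; thus the complexity decreases by a factor of at least two. -/
theorem truncation_series_halves_complexity (r : ℕ) (hr : 1 ≤ r) (Z d' : ℤ)
    (c d : ℕ → ℤ)
    (hcd : ∀ i < r, c i ≤ d i)
    (hchain : ∀ i, i + 1 < r → c (i + 1) ≤ c i ∧ c i ≤ d (i + 1) ∧ d (i + 1) ≤ Z)
    (hd0 : d 0 = Z)
    (hd' : c (r - 1) ≤ d')
    (hnotclose : 2 * (d' - c (r - 1) + 1) < Z - c (r - 1) + 1) :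
    (∏ i ∈ Finset.range r,
        (((if i + 1 < r then d (i + 1) - c i + 1 else d' - c (r - 1) + 1 : ℤ) : ℚ) /
          ((d i - c i + 1 : ℤ) : ℚ)))
      < 1 / 2 := by
  obtain ⟨m, rfl⟩ : ∃ m, r = m + 1 := ⟨r - 1, (Nat.succ_pred_eq_of_pos hr).symm⟩
  have hsub : m + 1 - 1 = m := rfl
  rw [hsub] at hd' hnotclose ⊢
  -- c i ≤ Z for all i ≤ m
  have hcZ : ∀ i ≤ m, c i ≤ Z := by
    intro i hi
    cases i with
    | zero => exact hd0 ▸ hcd 0 (Nat.succ_pos m)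
    | succ j =>
      obtain ⟨h1, h2, h3⟩ := hchain j (by omega)
      exact le_trans (hcd (j + 1) (by omega)) h3
  have hw : ∀ i ≤ m, (0 : ℚ) < ((d i - c i + 1 : ℤ) : ℚ) := by
    intro i hi
    have := hcd i (by omega)
    exact_mod_cast show (0 : ℤ) < d i - c i + 1 by omega
  have hA : ∀ i ≤ m, (0 : ℚ) < ((Z - c i + 1 : ℤ) : ℚ) := by
    intro i hi
    have := hcZ i hi
    exact_mod_cast show (0 : ℤ) < Z - c i + 1 by omega
  have key : ∀ n, n ≤ m →
      (∏ i ∈ Finset.range n,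
          (((d (i + 1) - c i + 1 : ℤ) : ℚ) / ((d i - c i + 1 : ℤ) : ℚ)))
        ≤ ((d n - c n + 1 : ℤ) : ℚ) / ((Z - c n + 1 : ℤ) : ℚ) := by
    intro n
    induction n with
    | zero =>
        intro _
        rw [Finset.prod_range_zero, hd0]
        exact (div_self (hA 0 (Nat.zero_le m)).ne').ge
    | succ k ih =>
      intro hk
      have h1 := ih (by omega)
      have hwk := hw k (by omega)
      have hwk1 := hw (k + 1) hk
      have hAk := hA k (by omega)
      have hAk1 := hA (k + 1) hk
      obtain ⟨hc1, hc2, hc3⟩ := hchain k (by omega)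
      have hNk : (0 : ℚ) < ((d (k + 1) - c k + 1 : ℤ) : ℚ) :=
        by exact_mod_cast show (0 : ℤ) < d (k + 1) - c k + 1 by omega
      rw [Finset.prod_range_succ]
      calc (∏ i ∈ Finset.range k,
              (((d (i + 1) - c i + 1 : ℤ) : ℚ) / ((d i - c i + 1 : ℤ) : ℚ))) *
            (((d (k + 1) - c k + 1 : ℤ) : ℚ) / ((d k - c k + 1 : ℤ) : ℚ))
          ≤ (((d k - c k + 1 : ℤ) : ℚ) / ((Z - c k + 1 : ℤ) : ℚ)) *
            (((d (k + 1) - c k + 1 : ℤ) : ℚ) / ((d k - c k + 1 : ℤ) : ℚ)) :=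
            mul_le_mul_of_nonneg_right h1 (by positivity)
        _ = ((d (k + 1) - c k + 1 : ℤ) : ℚ) / ((Z - c k + 1 : ℤ) : ℚ) := by
            rw [div_mul_div_comm, mul_comm (((Z - c k + 1 : ℤ) : ℚ))]
            exact mul_div_mul_left _ _ hwk.ne'
        _ ≤ ((d (k + 1) - c (k + 1) + 1 : ℤ) : ℚ) / ((Z - c (k + 1) + 1 : ℤ) : ℚ) := by
            rw [div_le_div_iff₀ hAk hAk1]
            have hZ : (d (k + 1) - c k + 1 : ℤ) * (Z - c (k + 1) + 1)
                ≤ (d (k + 1) - c (k + 1) + 1) * (Z - c k + 1) := by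
              nlinarith [mul_nonneg (sub_nonneg.2 hc1) (sub_nonneg.2 hc3)]
            exact_mod_cast hZ
  rw [Finset.prod_range_succ]
  have hif : ¬ (m + 1 < m + 1) := lt_irrefl _
  rw [if_neg hif]
  have hQ : (∏ i ∈ Finset.range m,
      (((if i + 1 < m + 1 then d (i + 1) - c i + 1 else d' - c m + 1 : ℤ) : ℚ) /
        ((d i - c i + 1 : ℤ) : ℚ)))
      = ∏ i ∈ Finset.range m,
          (((d (i + 1) - c i + 1 : ℤ) : ℚ) / ((d i - c i + 1 : ℤ) : ℚ)) := by
    refine Finset.prod_congr rfl fun i hi => ?_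
    rw [if_pos (by simp only [Finset.mem_range] at hi; omega)]
  rw [hQ]
  have hwm := hw m le_rfl
  have hAm := hA m le_rfl
  have hW : (0 : ℚ) < ((d' - c m + 1 : ℤ) : ℚ) :=
    by exact_mod_cast show (0 : ℤ) < d' - c m + 1 by omega
  calc (∏ i ∈ Finset.range m,
          (((d (i + 1) - c i + 1 : ℤ) : ℚ) / ((d i - c i + 1 : ℤ) : ℚ))) *
        (((d' - c m + 1 : ℤ) : ℚ) / ((d m - c m + 1 : ℤ) : ℚ))
      ≤ (((d m - c m + 1 : ℤ) : ℚ) / ((Z - c m + 1 : ℤ) : ℚ)) *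
        (((d' - c m + 1 : ℤ) : ℚ) / ((d m - c m + 1 : ℤ) : ℚ)) :=
        mul_le_mul_of_nonneg_right (key m le_rfl) (by positivity)
    _ = ((d' - c m + 1 : ℤ) : ℚ) / ((Z - c m + 1 : ℤ) : ℚ) := by
        rw [div_mul_div_comm, mul_comm (((Z - c m + 1 : ℤ) : ℚ))]
        exact mul_div_mul_left _ _ hwm.ne'
    _ < 1 / 2 := by
        rw [div_lt_div_iff₀ hAm (by norm_num)]
        exact_mod_cast show (d' - c m + 1 : ℤ) * 2 < 1 * (Z - c m + 1) by omega
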